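/- arXiv:1704.03612 — 2 statements merged into one kernel-verified Lean document; each statement's English description precedes it below -/
import Mathlib

section
/- The objective F(p) = pᵀMp is non-decreasing along trajectories of the discrete replicator dynamics: if p' is obtained from p ∈ Δ^n by the replicator update with a nonnegative symmetric matrix M, then F(p') ≥ F(p). (Baum–Eagon inequality for homogeneous quadratic forms.) -/
open Matrix Finset

/-- Baum–Eagon inequality: `F(p) = pᵀMp` is non-decreasing along the discrete
replicator dynamics. -/
theorem baum_eagon_nondecreasing (n : ℕ) (M : Matrix (Fin n) (Fin n) ℝ)
    (hsymm : M.IsSymm) (hnonneg : ∀ i j, 0 ≤ M i j)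
    (p : Fin n → ℝ) (hp : p ∈ stdSimplex ℝ (Fin n))
    (hpos : 0 < p ⬝ᵥ M.mulVec p)
    (p' : Fin n → ℝ)
    (hp' : ∀ i, p' i = p i * (M.mulVec p) i / (p ⬝ᵥ M.mulVec p)) :
    p ⬝ᵥ M.mulVec p ≤ p' ⬝ᵥ M.mulVec p' := by
  obtain ⟨hpnn, hpsum⟩ := hp
  set y : Fin n → ℝ := M.mulVec p with hy
  have hyd : ∀ i, y i = ∑ j, M i j * p j := fun i => rfl
  have hynn : ∀ i, 0 ≤ y i := fun i => by
    rw [hyd]; exact Finset.sum_nonneg fun j _ => mul_nonneg (hnonneg i j) (hpnn j)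
  set F : ℝ := p ⬝ᵥ y with hFdef
  have hFd : F = ∑ i, p i * y i := rfl
  have hF : 0 < F := hpos
  have hMsymm : ∀ i j, M i j = M j i := fun i j => hsymm.apply j i
  -- auxiliary quantities
  set s : Fin n → ℝ := fun i => ∑ j, M i j * p j * Real.sqrt (y j) with hs
  set Mx : Fin n → ℝ := fun i => ∑ j, M i j * (p j * y j) with hMx
  set G : ℝ := ∑ j, p j * y j * Real.sqrt (y j) with hG
  set A : ℝ := ∑ j, p j * Real.sqrt (y j) with hA
  have hGnn : 0 ≤ G := Finset.sum_nonneg fun j _ =>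
    mul_nonneg (mul_nonneg (hpnn j) (hynn j)) (Real.sqrt_nonneg _)
  have hAnn : 0 ≤ A := Finset.sum_nonneg fun j _ =>
    mul_nonneg (hpnn j) (Real.sqrt_nonneg _)
  -- Step 1 : A^2 ≤ F
  have step1 : A ^ 2 ≤ F := by
    have := Finset.sum_mul_sq_le_sq_mul_sq Finset.univ
      (fun j => Real.sqrt (p j)) (fun j => Real.sqrt (p j) * Real.sqrt (y j))
    have e1 : ∑ j, Real.sqrt (p j) * (Real.sqrt (p j) * Real.sqrt (y j)) = A := by
      refine Finset.sum_congr rfl fun j _ => ?_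
      rw [← mul_assoc, Real.mul_self_sqrt (hpnn j)]
    have e2 : ∑ j, Real.sqrt (p j) ^ 2 = 1 := by
      rw [← hpsum]; exact Finset.sum_congr rfl fun j _ => Real.sq_sqrt (hpnn j)
    have e3 : ∑ j, (Real.sqrt (p j) * Real.sqrt (y j)) ^ 2 = F := by
      rw [hFd]; refine Finset.sum_congr rfl fun j _ => ?_
      rw [mul_pow, Real.sq_sqrt (hpnn j), Real.sq_sqrt (hynn j)]
    rw [e1, e2, e3, one_mul] at this
    exact this
  -- Step 2 : F^2 ≤ G * A
  have step2 : F ^ 2 ≤ G * A := by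
    have := Finset.sum_mul_sq_le_sq_mul_sq Finset.univ
      (fun j => Real.sqrt (p j * y j * Real.sqrt (y j)))
      (fun j => Real.sqrt (p j * Real.sqrt (y j)))
    have e1 : ∑ j, Real.sqrt (p j * y j * Real.sqrt (y j)) * Real.sqrt (p j * Real.sqrt (y j))
        = F := by
      rw [hFd]; refine Finset.sum_congr rfl fun j _ => ?_
      have hnn : 0 ≤ p j * y j * Real.sqrt (y j) :=
        mul_nonneg (mul_nonneg (hpnn j) (hynn j)) (Real.sqrt_nonneg _)
      rw [← Real.sqrt_mul hnn]
      have hmm : Real.sqrt (y j) * Real.sqrt (y j) = y j := Real.mul_self_sqrt (hynn j)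
      have : p j * y j * Real.sqrt (y j) * (p j * Real.sqrt (y j))
          = (p j * y j) ^ 2 := by
        rw [show p j * y j * Real.sqrt (y j) * (p j * Real.sqrt (y j))
            = Real.sqrt (y j) * Real.sqrt (y j) * (p j * y j * p j) from by ring, hmm]
        ring
      rw [this, Real.sqrt_sq (mul_nonneg (hpnn j) (hynn j))]
    have e2 : ∑ j, Real.sqrt (p j * y j * Real.sqrt (y j)) ^ 2 = G := by
      refine Finset.sum_congr rfl fun j _ => Real.sq_sqrt
        (mul_nonneg (mul_nonneg (hpnn j) (hynn j)) (Real.sqrt_nonneg _))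
    have e3 : ∑ j, Real.sqrt (p j * Real.sqrt (y j)) ^ 2 = A := by
      refine Finset.sum_congr rfl fun j _ => Real.sq_sqrt
        (mul_nonneg (hpnn j) (Real.sqrt_nonneg _))
    rw [e1, e2, e3] at this
    exact this
  -- Step 3 : F^3 ≤ G^2
  have step3 : F ^ 3 ≤ G ^ 2 := by
    nlinarith [mul_le_mul step2 step2 (sq_nonneg F) (mul_nonneg hGnn hAnn),
      mul_le_mul_of_nonneg_left step1 (mul_nonneg hGnn hGnn), sq_nonneg (G*A)]
  -- Step 4 : pointwise CS : s i ^ 2 ≤ y i * Mx i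
  have step4 : ∀ i, s i ^ 2 ≤ y i * Mx i := by
    intro i
    have := Finset.sum_mul_sq_le_sq_mul_sq Finset.univ
      (fun j => Real.sqrt (M i j * p j))
      (fun j => Real.sqrt (M i j * (p j * y j)))
    have e1 : ∑ j, Real.sqrt (M i j * p j) * Real.sqrt (M i j * (p j * y j)) = s i := by
      refine Finset.sum_congr rfl fun j _ => ?_
      rw [← Real.sqrt_mul (mul_nonneg (hnonneg i j) (hpnn j))]
      have : M i j * p j * (M i j * (p j * y j)) = (M i j * p j) ^ 2 * y j := by ring
      rw [this, Real.sqrt_mul (sq_nonneg _), Real.sqrt_sq (mul_nonneg (hnonneg i j) (hpnn j))]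
    have e2 : ∑ j, Real.sqrt (M i j * p j) ^ 2 = y i := by
      rw [hyd]; exact Finset.sum_congr rfl fun j _ =>
        Real.sq_sqrt (mul_nonneg (hnonneg i j) (hpnn j))
    have e3 : ∑ j, Real.sqrt (M i j * (p j * y j)) ^ 2 = Mx i := by
      exact Finset.sum_congr rfl fun j _ =>
        Real.sq_sqrt (mul_nonneg (hnonneg i j) (mul_nonneg (hpnn j) (hynn j)))
    rw [e1, e2, e3] at this
    exact this
  -- Step 5 : ∑ p i * s i = G
  have step5 : ∑ i, p i * s i = G := by
    have : ∑ i, p i * s i = ∑ j, (∑ i, M j i * p i) * (p j * Real.sqrt (y j)) := by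
      simp only [hs, Finset.mul_sum]
      rw [Finset.sum_comm]
      refine Finset.sum_congr rfl fun j _ => ?_
      rw [Finset.sum_mul]
      refine Finset.sum_congr rfl fun i _ => ?_
      rw [hMsymm i j]; ring
    rw [this, hG]
    refine Finset.sum_congr rfl fun j _ => ?_
    rw [← hyd j]; ring
  -- Step 6 : G^2 ≤ ∑ p i * s i ^ 2
  have hsnn : ∀ i, 0 ≤ s i := fun i => Finset.sum_nonneg fun j _ =>
    mul_nonneg (mul_nonneg (hnonneg i j) (hpnn j)) (Real.sqrt_nonneg _)
  have step6 : G ^ 2 ≤ ∑ i, p i * s i ^ 2 := by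
    have := Finset.sum_mul_sq_le_sq_mul_sq Finset.univ
      (fun i => Real.sqrt (p i)) (fun i => Real.sqrt (p i) * s i)
    have e1 : ∑ i, Real.sqrt (p i) * (Real.sqrt (p i) * s i) = G := by
      rw [← step5]; refine Finset.sum_congr rfl fun i _ => ?_
      rw [← mul_assoc, Real.mul_self_sqrt (hpnn i)]
    have e2 : ∑ i, Real.sqrt (p i) ^ 2 = 1 := by
      rw [← hpsum]; exact Finset.sum_congr rfl fun i _ => Real.sq_sqrt (hpnn i)
    have e3 : ∑ i, (Real.sqrt (p i) * s i) ^ 2 = ∑ i, p i * s i ^ 2 := by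
      refine Finset.sum_congr rfl fun i _ => ?_
      rw [mul_pow, Real.sq_sqrt (hpnn i)]
    rw [e1, e2, e3, one_mul] at this
    exact this
  -- Step 7 : ∑ p i * s i ^ 2 ≤ T
  have step7 : ∑ i, p i * s i ^ 2 ≤ ∑ i, p i * y i * Mx i := by
    refine Finset.sum_le_sum fun i _ => ?_
    rw [mul_assoc]
    exact mul_le_mul_of_nonneg_left (step4 i) (hpnn i)
  -- Conclusion : p' ⬝ᵥ M.mulVec p' = T / F^2 and F^3 ≤ T
  have hT : F ^ 3 ≤ ∑ i, p i * y i * Mx i :=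
    le_trans step3 (le_trans step6 step7)
  have hfinal : p' ⬝ᵥ M.mulVec p' = (∑ i, p i * y i * Mx i) / F ^ 2 := by
    have : p' ⬝ᵥ M.mulVec p' = ∑ i, p' i * ∑ j, M i j * p' j := rfl
    have hF0 : F ≠ 0 := ne_of_gt hF
    rw [this, Finset.sum_div]
    refine Finset.sum_congr rfl fun i _ => ?_
    simp only [hMx]
    rw [hp' i]
    calc p i * y i / F * ∑ j, M i j * p' j
        = ∑ j, p i * y i * (M i j * (p j * y j)) / F ^ 2 := by
          rw [Finset.mul_sum]
          exact Finset.sum_congr rfl fun j _ => by rw [hp' j]; ring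
      _ = (p i * y i * ∑ j, M i j * (p j * y j)) / F ^ 2 := by
          rw [← Finset.sum_div, ← Finset.mul_sum]
  rw [hfinal, le_div_iff₀ (pow_pos hF 2)]
  calc F * F ^ 2 = F ^ 3 := by ring
    _ ≤ _ := hT
end

section
/- Under the replicator update with positive matrix M restricted to the support, strict inequality F(p') > F(p) holds unless p is a fixed point of the replicator map (i.e., (Mp)_i = pᵀMp for all i in the support of p). -/
open Matrix

/-- Strict Baum–Eagon inequality: under the replicator update, `F(p') > F(p)`
unless `p` is a fixed point, i.e. `(Mp)_i = pᵀMp` for all `i` in the support. -/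
theorem baum_eagon_strict (n : ℕ) (M : Matrix (Fin n) (Fin n) ℝ)
    (hsymm : M.IsSymm) (hnonneg : ∀ i j, 0 ≤ M i j)
    (p : Fin n → ℝ) (hp : p ∈ stdSimplex ℝ (Fin n))
    (hposM : ∀ i, p i ≠ 0 → 0 < (M.mulVec p) i)
    (hpos : 0 < p ⬝ᵥ M.mulVec p)
    (p' : Fin n → ℝ)
    (hp' : ∀ i, p' i = p i * (M.mulVec p) i / (p ⬝ᵥ M.mulVec p))
    (hnotfix : ¬ ∀ i, p i ≠ 0 → (M.mulVec p) i = p ⬝ᵥ M.mulVec p) :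
    p ⬝ᵥ M.mulVec p < p' ⬝ᵥ M.mulVec p' := by
  classical
  set w : Fin n → ℝ := M.mulVec p with hw
  set F : ℝ := p ⬝ᵥ M.mulVec p with hF
  have hFne : F ≠ 0 := ne_of_gt hpos
  have hpnn : ∀ i, 0 ≤ p i := fun i => hp.1 i
  have hpsum : ∑ i, p i = 1 := hp.2
  -- x i = w i / F
  set x : Fin n → ℝ := fun i => w i / F with hx
  set KL : ℝ := ∑ i, p' i * Real.log (x i) with hKL
  have hwnn : ∀ i, 0 ≤ w i := by
    intro i
    show 0 ≤ ∑ j, M i j * p j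
    exact Finset.sum_nonneg fun j _ => mul_nonneg (hnonneg i j) (hpnn j)
  have hp'x : ∀ i, p' i = p i * x i := by
    intro i
    rw [hp' i, hx, mul_div_assoc]
  have hp'nn : ∀ i, 0 ≤ p' i := by
    intro i
    rw [hp'x i]
    exact mul_nonneg (hpnn i) (div_nonneg (hwnn i) hpos.le)
  have hFsum : F = ∑ i, p i * w i := rfl
  have hp'sum : ∑ i, p' i = 1 := by
    have : ∑ i, p' i = (∑ i, p i * w i) / F := by
      rw [Finset.sum_div]
      exact Finset.sum_congr rfl fun i _ => hp' i
    rw [this, ← hFsum, div_self hFne]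
  -- the non-fixed index
  push_neg at hnotfix
  obtain ⟨i₀, hpi₀, hwi₀⟩ := hnotfix
  -- KL > 0
  have hKLpos : 0 < KL := by
    have key : ∀ i ∈ Finset.univ, p' i - p i ≤ p' i * Real.log (x i) := by
      intro i _
      by_cases hpi : p i = 0
      · have h0 : p' i = 0 := by rw [hp'x i, hpi, zero_mul]
        rw [h0, hpi, zero_mul]
        norm_num
      · have hwi : 0 < w i := hposM i hpi
        have hxi : 0 < x i := div_pos hwi hpos
        have hlog : 1 - (x i)⁻¹ ≤ Real.log (x i) := Real.one_sub_inv_le_log_of_pos hxi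
        have hinv : p' i * (x i)⁻¹ = p i := by
          rw [hp'x i, mul_assoc, mul_inv_cancel₀ (ne_of_gt hxi), mul_one]
        calc p' i - p i = p' i * (1 - (x i)⁻¹) := by rw [mul_sub, mul_one, hinv]
          _ ≤ p' i * Real.log (x i) := mul_le_mul_of_nonneg_left hlog (hp'nn i)
    have keystrict : p' i₀ - p i₀ < p' i₀ * Real.log (x i₀) := by
      have hwi : 0 < w i₀ := hposM i₀ hpi₀
      have hxi : 0 < x i₀ := div_pos hwi hpos
      have hxne : x i₀ ≠ 1 := by
        intro h
        apply hwi₀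
        have := (div_eq_one_iff_eq hFne).mp h
        exact this
      have hxinvne : (x i₀)⁻¹ ≠ 1 := by
        intro h
        exact hxne (by rw [← inv_inv (x i₀), h, inv_one])
      have hlog : 1 - (x i₀)⁻¹ < Real.log (x i₀) := by
        have := Real.log_lt_sub_one_of_pos (inv_pos.2 hxi) hxinvne
        rw [Real.log_inv] at this
        linarith
      have hp'pos : 0 < p' i₀ := by
        rw [hp'x i₀]
        exact mul_pos (lt_of_le_of_ne (hpnn i₀) (Ne.symm hpi₀)) hxi
      have hinv : p' i₀ * (x i₀)⁻¹ = p i₀ := by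
        rw [hp'x i₀, mul_assoc, mul_inv_cancel₀ (ne_of_gt hxi), mul_one]
      calc p' i₀ - p i₀ = p' i₀ * (1 - (x i₀)⁻¹) := by rw [mul_sub, mul_one, hinv]
        _ < p' i₀ * Real.log (x i₀) := by
            exact (mul_lt_mul_iff_right₀ hp'pos).mpr hlog
    have hsumlt : ∑ i, (p' i - p i) < ∑ i, p' i * Real.log (x i) :=
      Finset.sum_lt_sum key ⟨i₀, Finset.mem_univ i₀, keystrict⟩
    have : ∑ i, (p' i - p i) = 0 := by
      rw [Finset.sum_sub_distrib, hp'sum, hpsum, sub_self]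
    rw [hKL]
    linarith
  -- termwise inequality
  have key2 : ∀ i j, M i j * p i * p j * (1 + Real.log (x i) + Real.log (x j))
      ≤ M i j * p' i * p' j := by
    intro i j
    by_cases hpi : p i = 0
    · have h0 : p' i = 0 := by rw [hp'x i, hpi, zero_mul]
      rw [h0, hpi]
      simp
    by_cases hpj : p j = 0
    · have h0 : p' j = 0 := by rw [hp'x j, hpj, zero_mul]
      rw [h0, hpj]
      simp
    have hxi : 0 < x i := div_pos (hposM i hpi) hpos
    have hxj : 0 < x j := div_pos (hposM j hpj) hpos
    have hlog : Real.log (x i) + Real.log (x j) ≤ x i * x j - 1 := by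
      have := Real.log_le_sub_one_of_pos (mul_pos hxi hxj)
      rwa [Real.log_mul (ne_of_gt hxi) (ne_of_gt hxj)] at this
    have hMpp : 0 ≤ M i j * p i * p j :=
      mul_nonneg (mul_nonneg (hnonneg i j) (hpnn i)) (hpnn j)
    have : M i j * p i * p j * (1 + Real.log (x i) + Real.log (x j))
        ≤ M i j * p i * p j * (x i * x j) := by
      apply mul_le_mul_of_nonneg_left _ hMpp
      linarith
    calc M i j * p i * p j * (1 + Real.log (x i) + Real.log (x j))
        ≤ M i j * p i * p j * (x i * x j) := this
      _ = M i j * p' i * p' j := by rw [hp'x i, hp'x j]; ring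
  -- sum the termwise inequality
  have hsum2 : ∑ i, ∑ j, M i j * p i * p j * (1 + Real.log (x i) + Real.log (x j))
      ≤ p' ⬝ᵥ M.mulVec p' := by
    have hrhs : p' ⬝ᵥ M.mulVec p' = ∑ i, ∑ j, M i j * p' i * p' j := by
      simp only [dotProduct, mulVec, Finset.mul_sum]
      exact Finset.sum_congr rfl fun i _ => Finset.sum_congr rfl fun j _ => by ring
    rw [hrhs]
    exact Finset.sum_le_sum fun i _ => Finset.sum_le_sum fun j _ => key2 i j
  -- compute the left double sum
  have hwi_sum : ∀ i, w i = ∑ j, M i j * p j := fun i => rfl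
  have hS1 : ∑ i, ∑ j, M i j * p i * p j = F := by
    rw [hFsum]
    apply Finset.sum_congr rfl
    intro i _
    rw [hwi_sum i, Finset.mul_sum]
    exact Finset.sum_congr rfl fun j _ => by ring
  have hFp' : ∀ i, F * p' i = p i * w i := by
    intro i
    rw [hp' i, mul_div_assoc]
    field_simp
  have hS2 : ∑ i, ∑ j, M i j * p i * p j * Real.log (x i) = F * KL := by
    have : ∀ i, ∑ j, M i j * p i * p j * Real.log (x i)
        = p i * w i * Real.log (x i) := by
      intro i
      rw [hwi_sum i]
      simp only [Finset.mul_sum, Finset.sum_mul]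
      exact Finset.sum_congr rfl fun j _ => by ring
    rw [Finset.sum_congr rfl fun i _ => this i, hKL, Finset.mul_sum]
    exact Finset.sum_congr rfl fun i _ => by rw [← mul_assoc, hFp' i]
  have hS3 : ∑ i, ∑ j, M i j * p i * p j * Real.log (x j) = F * KL := by
    rw [Finset.sum_comm]
    have : ∀ j, ∑ i, M i j * p i * p j * Real.log (x j)
        = p j * w j * Real.log (x j) := by
      intro j
      rw [hwi_sum j]
      simp only [Finset.mul_sum, Finset.sum_mul]
      apply Finset.sum_congr rfl
      intro i _
      rw [hsymm.apply j i]
      ring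
    rw [Finset.sum_congr rfl fun j _ => this j, hKL, Finset.mul_sum]
    exact Finset.sum_congr rfl fun i _ => by rw [← mul_assoc, hFp' i]
  have hLHS : ∑ i, ∑ j, M i j * p i * p j * (1 + Real.log (x i) + Real.log (x j))
      = F + F * KL + F * KL := by
    have expand : ∀ i j, M i j * p i * p j * (1 + Real.log (x i) + Real.log (x j))
        = M i j * p i * p j + M i j * p i * p j * Real.log (x i)
          + M i j * p i * p j * Real.log (x j) := fun i j => by ring
    calc ∑ i, ∑ j, M i j * p i * p j * (1 + Real.log (x i) + Real.log (x j))
        = ∑ i, ∑ j, (M i j * p i * p j + M i j * p i * p j * Real.log (x i)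
          + M i j * p i * p j * Real.log (x j)) := by
          exact Finset.sum_congr rfl fun i _ => Finset.sum_congr rfl fun j _ => expand i j
      _ = (∑ i, ∑ j, M i j * p i * p j)
          + (∑ i, ∑ j, M i j * p i * p j * Real.log (x i))
          + (∑ i, ∑ j, M i j * p i * p j * Real.log (x j)) := by
          simp [Finset.sum_add_distrib]
      _ = F + F * KL + F * KL := by rw [hS1, hS2, hS3]
  rw [hLHS] at hsum2
  have : 0 < F * KL := mul_pos hpos hKLpos
  linarith
end
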